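/- For every real number α with 0 < α < 1 and every feasible distribution p for the symmetric TSC scheme, one has Σ_{m=1}^{N^K} p_m^α ≤ Σ_{m=1}^{N^K} (p*_m)^α; consequently p* minimizes the Rényi divergence of order α from the uniform distribution among all feasible distributions. -/

import Mathlib

open Finset Real

/-- Download cost of option `m` (0-indexed: options `1,…,N` of the paper are `m < N`)
in the symmetric TSC scheme with `N` databases and `K` messages. -/
noncomputable def tscCost (N m : ℕ) : ℝ := if m < N then (N : ℝ) - 1 else (N : ℝ)

/-- `p` is a feasible query distribution for the symmetric TSC scheme with expected
normalized download cost `D`. -/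
def TSCFeasible (N K : ℕ) (D : ℝ) (p : ℕ → ℝ) : Prop :=
  (∀ m ∈ Finset.range (N ^ K), 0 ≤ p m) ∧
  (∑ m ∈ Finset.range (N ^ K), p m = 1) ∧
  (1 / ((N : ℝ) - 1)) * (∑ m ∈ Finset.range (N ^ K), p m * tscCost N m) = D

/-- The optimal distribution `p*` for the symmetric TSC scheme. -/
noncomputable def tscOpt (N K : ℕ) (D : ℝ) (m : ℕ) : ℝ :=
  if m < N then (1 - ((N : ℝ) - 1) * (D - 1)) / N
  else ((N : ℝ) - 1) * (D - 1) / ((N : ℝ) ^ K - (N : ℝ))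

/-- Download cost of option `m` (0-indexed) in the alternative PIR scheme with
message length `L`. -/
noncomputable def altCost (N L m : ℕ) : ℝ := if m < N then (L : ℝ) else (L : ℝ) + 1

/-- `p` is a feasible query distribution for the alternative PIR scheme
(`M = N (L+1)^(K-1)` options) with expected normalized download cost `D`. -/
def AltFeasible (N K L : ℕ) (D : ℝ) (p : ℕ → ℝ) : Prop :=
  (∀ m ∈ Finset.range (N * (L + 1) ^ (K - 1)), 0 ≤ p m) ∧
  (∑ m ∈ Finset.range (N * (L + 1) ^ (K - 1)), p m = 1) ∧
  (1 / (L : ℝ)) * (∑ m ∈ Finset.range (N * (L + 1) ^ (K - 1)), p m * altCost N L m) = D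

/-- The optimal distribution `q*` for the alternative PIR scheme. -/
noncomputable def altOpt (N K L : ℕ) (D : ℝ) (m : ℕ) : ℝ :=
  if m < N then (1 - (L : ℝ) * (D - 1)) / N
  else (L : ℝ) * (D - 1) / ((N : ℝ) * ((L : ℝ) + 1) ^ (K - 1) - (N : ℝ))

/-- Rényi divergence of order `α` (`0 < α`, `α ≠ 1`) of a distribution `p` on `M`
options from the uniform distribution on those options (natural logarithm). -/
noncomputable def renyiDiv (M : ℕ) (α : ℝ) (p : ℕ → ℝ) : ℝ :=
  (1 / (α - 1)) * Real.log ((M : ℝ) ^ (α - 1) * ∑ m ∈ Finset.range M, p m ^ α)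

/-- Kullback–Leibler divergence of a distribution `p` on `M` options from the uniform
distribution on those options (natural logarithm, with `0 · log 0 = 0`). -/
noncomputable def klDivUnif (M : ℕ) (p : ℕ → ℝ) : ℝ :=
  ∑ m ∈ Finset.range M, p m * Real.log ((M : ℝ) * p m)

/-- The maximum of `p` over the `M` options. -/
noncomputable def maxOver (M : ℕ) (hM : M ≠ 0) (p : ℕ → ℝ) : ℝ :=
  (Finset.range M).sup' (Finset.nonempty_range_iff.mpr hM) p

/-- for `0 < α < 1`, every feasible `p` for the symmetric TSC scheme satisfies
`∑ pₘ^α ≤ ∑ p*ₘ^α`; consequently `p*` minimizes the order-`α` Rényi divergence from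
uniform among feasible distributions. -/
private lemma concave_sum_le (s : Finset ℕ) (hs : s.Nonempty) (f : ℕ → ℝ)
    (hf : ∀ i ∈ s, 0 ≤ f i) (α : ℝ) (hα0 : 0 < α) (hα1 : α < 1) :
    ∑ i ∈ s, f i ^ α ≤ (s.card : ℝ) * ((∑ i ∈ s, f i) / s.card) ^ α := by
  have hn : (0:ℝ) < s.card := by exact_mod_cast Finset.card_pos.mpr hs
  have hp : (1:ℝ) ≤ 1 / α := by rw [le_div_iff₀ hα0]; linarith
  have key := Real.arith_mean_le_rpow_mean s (fun _ => 1 / (s.card : ℝ))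
    (fun i => f i ^ α) (fun i _ => by positivity)
    (by rw [Finset.sum_const, nsmul_eq_mul]; field_simp)
    (fun i hi => Real.rpow_nonneg (hf i hi) α) hp
  have hsimp : ∀ i ∈ s, 1 / (s.card : ℝ) * (f i ^ α) ^ (1/α) = 1 / (s.card : ℝ) * f i := by
    intro i hi
    rw [← Real.rpow_mul (hf i hi), mul_one_div, div_self hα0.ne', Real.rpow_one]
  rw [Finset.sum_congr rfl hsimp, one_div_one_div, ← Finset.mul_sum, ← Finset.mul_sum,
    one_div_mul_eq_div, one_div_mul_eq_div] at key
  calc ∑ i ∈ s, f i ^ α = (s.card : ℝ) * ((∑ i ∈ s, f i ^ α) / (s.card : ℝ)) := by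
        field_simp
    _ ≤ (s.card : ℝ) * ((∑ i ∈ s, f i) / s.card) ^ α :=
        mul_le_mul_of_nonneg_left key hn.le

theorem tsc_renyi_min_lt_one (N K : ℕ) (hN : 2 ≤ N) (hK : 2 ≤ K) (D : ℝ)
    (hD1 : 1 ≤ D) (hD2 : D ≤ ∑ k ∈ Finset.range K, ((N : ℝ) ^ k)⁻¹)
    (α : ℝ) (hα0 : 0 < α) (hα1 : α < 1)
    (p : ℕ → ℝ) (hp : TSCFeasible N K D p) :
    (∑ m ∈ Finset.range (N ^ K), p m ^ α) ≤
      (∑ m ∈ Finset.range (N ^ K), tscOpt N K D m ^ α) ∧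
    renyiDiv (N ^ K) α (tscOpt N K D) ≤ renyiDiv (N ^ K) α p := by
  obtain ⟨hpos, hsum1, hcost⟩ := hp
  set M := N ^ K with hM
  clear_value M
  have hNM' : N < N ^ K := by
    calc N = N ^ 1 := (pow_one N).symm
    _ < N ^ K := Nat.pow_lt_pow_right (by omega) (by omega)
  have hNM : N < M := hM ▸ hNM'
  have hsplit : ∀ f : ℕ → ℝ, ∑ m ∈ Finset.range M, f m
      = ∑ m ∈ Finset.range N, f m + ∑ m ∈ Finset.Ico N M, f m := by
    intro f
    rw [Finset.range_eq_Ico, Finset.range_eq_Ico]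
    exact (Finset.sum_Ico_consecutive f (Nat.zero_le N) hNM.le).symm
  -- group masses
  set A := ∑ m ∈ Finset.range N, p m with hA
  set B := ∑ m ∈ Finset.Ico N M, p m with hB
  have hAB : A + B = 1 := by rw [hA, hB, ← hsplit]; exact hsum1
  have hN1 : (0:ℝ) < (N:ℝ) - 1 := by
    have : (2:ℝ) ≤ N := by exact_mod_cast hN
    linarith
  have hcost' : ((N:ℝ) - 1) * A + (N:ℝ) * B = ((N:ℝ) - 1) * D := by
    have h1 : ∑ m ∈ Finset.range N, p m * tscCost N m = ((N:ℝ)-1) * A := by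
      rw [hA, Finset.mul_sum]
      refine Finset.sum_congr rfl fun m hm => ?_
      rw [tscCost, if_pos (Finset.mem_range.mp hm)]; ring
    have h2 : ∑ m ∈ Finset.Ico N M, p m * tscCost N m = (N:ℝ) * B := by
      rw [hB, Finset.mul_sum]
      refine Finset.sum_congr rfl fun m hm => ?_
      rw [tscCost, if_neg (Nat.not_lt.mpr (Finset.mem_Ico.mp hm).1)]; ring
    have := hcost
    rw [hsplit, h1, h2, one_div, inv_mul_eq_div, div_eq_iff hN1.ne'] at this
    linarith
  have hBval : B = ((N:ℝ) - 1) * (D - 1) := by nlinarith [hcost']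
  have hAval : A = 1 - ((N:ℝ) - 1) * (D - 1) := by nlinarith [hAB, hBval]
  -- positivity facts
  have hNpos : (0:ℝ) < N := by positivity
  have hMN : (0:ℝ) < (N:ℝ)^K - N := by
    have : (N:ℝ) < (N:ℝ)^K := by exact_mod_cast hNM'
    linarith
  have hcard2 : ((Finset.Ico N M).card : ℝ) = (N:ℝ)^K - N := by
    rw [Nat.card_Ico]
    rw [hM]; push_cast [Nat.cast_sub hNM'.le]
    ring
  -- optimal sums are constants
  have hopt1 : ∑ m ∈ Finset.range N, tscOpt N K D m ^ α = (N:ℝ) * (A / N) ^ α := by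
    rw [Finset.sum_congr rfl (fun m hm => by
      rw [tscOpt, if_pos (Finset.mem_range.mp hm)]), Finset.sum_const, Finset.card_range,
      nsmul_eq_mul, hAval]
  have hopt2 : ∑ m ∈ Finset.Ico N M, tscOpt N K D m ^ α
      = ((N:ℝ)^K - N) * (B / ((N:ℝ)^K - N)) ^ α := by
    rw [Finset.sum_congr rfl (fun m hm => by
      rw [tscOpt, if_neg (by have := (Finset.mem_Ico.mp hm).1; omega)]),
      Finset.sum_const, Nat.card_Ico, nsmul_eq_mul, hBval]
    congr 1
    rw [hM]; push_cast [Nat.cast_sub hNM'.le]; ring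
  -- the two Jensen steps
  have hle1 : ∑ m ∈ Finset.range N, p m ^ α ≤ (N:ℝ) * (A / N) ^ α := by
    have := concave_sum_le (Finset.range N) (Finset.nonempty_range_iff.mpr (by omega))
      p (fun i hi => hpos i (Finset.mem_range.mp hi |>.trans hNM |> Finset.mem_range.mpr))
      α hα0 hα1
    simpa [Finset.card_range] using this
  have hle2 : ∑ m ∈ Finset.Ico N M, p m ^ α ≤ ((N:ℝ)^K - N) * (B / ((N:ℝ)^K - N)) ^ α := by
    have hne : (Finset.Ico N M).Nonempty := by
      rw [Finset.nonempty_Ico]; exact hNM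
    have := concave_sum_le (Finset.Ico N M) hne p
      (fun i hi => hpos i (Finset.mem_range.mpr (Finset.mem_Ico.mp hi).2)) α hα0 hα1
    rwa [hcard2] at this
  have main : (∑ m ∈ Finset.range M, p m ^ α) ≤ ∑ m ∈ Finset.range M, tscOpt N K D m ^ α := by
    rw [hsplit, hsplit (fun m => tscOpt N K D m ^ α), hopt1, hopt2]
    exact add_le_add hle1 hle2
  refine ⟨main, ?_⟩
  -- Renyi divergence comparison
  have hppos : 0 < ∑ m ∈ Finset.range M, p m ^ α := by
    obtain ⟨m, hm, hpm⟩ : ∃ m ∈ Finset.range M, 0 < p m := by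
      by_contra h
      push_neg at h
      have : ∑ m ∈ Finset.range M, p m = 0 :=
        Finset.sum_eq_zero fun m hm => le_antisymm (h m hm) (hpos m hm)
      rw [hsum1] at this; norm_num at this
    exact Finset.sum_pos' (fun i hi => Real.rpow_nonneg (hpos i hi) α)
      ⟨m, hm, Real.rpow_pos_of_pos hpm α⟩
  have hqpos : 0 < ∑ m ∈ Finset.range M, tscOpt N K D m ^ α := lt_of_lt_of_le hppos main
  have hMpos : (0:ℝ) < (M:ℝ) ^ (α - 1) := by
    apply Real.rpow_pos_of_pos
    have : 0 < M := by omega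
    exact_mod_cast this
  rw [renyiDiv, renyiDiv]
  have hlog : Real.log ((M:ℝ) ^ (α-1) * ∑ m ∈ Finset.range M, p m ^ α)
      ≤ Real.log ((M:ℝ) ^ (α-1) * ∑ m ∈ Finset.range M, tscOpt N K D m ^ α) := by
    apply Real.log_le_log (by positivity)
    exact mul_le_mul_of_nonneg_left main hMpos.le
  have hneg : 1 / (α - 1) ≤ 0 := by
    apply div_nonpos_of_nonneg_of_nonpos <;> linarith
  exact mul_le_mul_of_nonpos_left hlog hneg
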